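/- Define f(N, k) = (2 sin((n-2+k)π/N))² for integers N ≥ 1, k ≥ 1, and fixed n ≥ 2, and g(N, j) = ∏_{k=1}^{j} f(N, k). For all N sufficiently large, the maximum of g(N, j) over 0 ≤ j ≤ N-1 is attained at some j with ⌊(5/6)N - 2(n-2)⌋ ≤ j ≤ ⌊(5/6)N⌋ - (n-2). -/

import Mathlib

/-- `f(N,k) = (2 sin((n-2+k)π/N))²`. -/
noncomputable def fTerm (n N k : ℕ) : ℝ :=
  (2 * Real.sin (((n : ℝ) - 2 + k) * Real.pi / N)) ^ 2

/-- `g(N,j) = ∏_{k=1}^{j} f(N,k)`. -/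
noncomputable def gTerm (n N j : ℕ) : ℝ :=
  ∏ k ∈ Finset.range j, fTerm n N (k + 1)


open Real in
private lemma sin_ge_half' {θ : ℝ} (h1 : π/6 ≤ θ) (h2 : θ ≤ 5*π/6) : 1/2 ≤ Real.sin θ := by
  have hπ := Real.pi_pos
  rcases le_total θ (π/2) with h | h
  · calc (1:ℝ)/2 = Real.sin (π/6) := Real.sin_pi_div_six.symm
      _ ≤ Real.sin θ :=
        Real.sin_le_sin_of_le_of_le_pi_div_two (by linarith) h h1
  · rw [← Real.sin_pi_sub]
    calc (1:ℝ)/2 = Real.sin (π/6) := Real.sin_pi_div_six.symm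
      _ ≤ Real.sin (π - θ) :=
        Real.sin_le_sin_of_le_of_le_pi_div_two (by linarith) (by linarith) (by linarith)

open Real in
private lemma one_le_sinsq (t N : ℕ) (hN : 0 < N) (h1 : N ≤ 6*t) (h2 : 6*t ≤ 5*N) :
    1 ≤ (2 * Real.sin ((t:ℝ) * π / N))^2 := by
  have hπ := Real.pi_pos
  have hNc : (N:ℝ) ≤ 6*t := by exact_mod_cast h1
  have h2c : (6*t:ℝ) ≤ 5*N := by exact_mod_cast h2
  have hNpos : (0:ℝ) < N := by exact_mod_cast hN
  have hs : 1/2 ≤ Real.sin ((t:ℝ)*π/N) := by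
    apply sin_ge_half'
    · rw [div_le_div_iff₀ (by norm_num) hNpos]; nlinarith
    · rw [div_le_div_iff₀ hNpos (by norm_num)]; nlinarith
  nlinarith

open Real in
private lemma sinsq_le_low' {θ : ℝ} (h0 : 0 ≤ θ) (h : θ ≤ π/6) : (2 * Real.sin θ)^2 ≤ 1 := by
  have hπ := Real.pi_pos
  have h1 : Real.sin θ ≤ 1/2 := by
    calc Real.sin θ ≤ Real.sin (π/6) :=
          Real.sin_le_sin_of_le_of_le_pi_div_two (by linarith) (by linarith) h
      _ = 1/2 := Real.sin_pi_div_six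
  have h2 : 0 ≤ Real.sin θ := Real.sin_nonneg_of_nonneg_of_le_pi h0 (by linarith)
  nlinarith

open Real in
private lemma le_one_sinsq_low (t N : ℕ) (hN : 0 < N) (h : 6*t ≤ N) :
    (2 * Real.sin ((t:ℝ) * π / N))^2 ≤ 1 := by
  have hπ := Real.pi_pos
  have hc : (6*t:ℝ) ≤ N := by exact_mod_cast h
  have hNpos : (0:ℝ) < N := by exact_mod_cast hN
  apply sinsq_le_low' (by positivity)
  rw [div_le_div_iff₀ hNpos (by norm_num)]; nlinarith

open Real in
private lemma le_one_sinsq_high (t N : ℕ) (hN : 0 < N) (h1 : 5*N ≤ 6*t) (h2 : t ≤ N) :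
    (2 * Real.sin ((t:ℝ) * π / N))^2 ≤ 1 := by
  have hπ := Real.pi_pos
  have h1c : (5*N:ℝ) ≤ 6*t := by exact_mod_cast h1
  have h2c : (t:ℝ) ≤ N := by exact_mod_cast h2
  have hNpos : (0:ℝ) < N := by exact_mod_cast hN
  have hsub : π - (t:ℝ)*π/N = ((N:ℝ)-t)*π/N := by field_simp
  rw [show Real.sin ((t:ℝ)*π/N) = Real.sin (π - (t:ℝ)*π/N) from (Real.sin_pi_sub _).symm, hsub]
  apply sinsq_le_low'
  · apply div_nonneg (mul_nonneg (by linarith) hπ.le) hNpos.le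
  · rw [div_le_div_iff₀ hNpos (by norm_num)]; nlinarith

open Real in
private lemma le_one_sinsq_over (t N : ℕ) (hN : 0 < N) (h1 : N ≤ t) (h2 : 8*(t-N) ≤ N) :
    (2 * Real.sin ((t:ℝ) * π / N))^2 ≤ 1 := by
  have hπ := Real.pi_pos
  have hπ4 : π < 4 := by nlinarith [Real.pi_lt_d2]
  have hNpos : (0:ℝ) < N := by exact_mod_cast hN
  set x : ℕ := t - N with hx
  have htx : (t:ℝ) = (N:ℝ) + x := by
    have : t = N + x := by omega
    rw [this]; push_cast; ring
  have h2c : (8*x:ℝ) ≤ N := by exact_mod_cast h2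
  have hy0 : 0 ≤ (x:ℝ)*π/N := by positivity
  have hy : (x:ℝ)*π/N ≤ 1/2 := by
    rw [div_le_div_iff₀ hNpos (by norm_num)]; nlinarith
  have harg : (t:ℝ)*π/N = π + (x:ℝ)*π/N := by
    rw [htx]; field_simp
  rw [harg, Real.sin_add]
  simp only [Real.sin_pi, Real.cos_pi]
  have hs1 : Real.sin ((x:ℝ)*π/N) ≤ (x:ℝ)*π/N := Real.sin_le hy0
  have hs2 : 0 ≤ Real.sin ((x:ℝ)*π/N) :=
    Real.sin_nonneg_of_nonneg_of_le_pi hy0 (by linarith [Real.pi_gt_three])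
  nlinarith

open Real in
private lemma normSq_one_sub_exp (φ : ℝ) :
    Complex.normSq (1 - Complex.exp (φ * Complex.I)) = (2 * Real.sin (φ/2))^2 := by
  rw [Complex.exp_mul_I]
  have hc : Real.cos φ = 1 - 2 * Real.sin (φ/2)^2 := by
    have h1 := Real.cos_two_mul (φ/2)
    have h2 := Real.sin_sq_add_cos_sq (φ/2)
    rw [show 2*(φ/2) = φ by ring] at h1
    nlinarith
  simp [Complex.normSq_apply, Complex.sub_re, Complex.sub_im, Complex.add_re, Complex.add_im,
    Complex.mul_re, Complex.mul_im, Complex.I_re, Complex.I_im, Complex.cos_ofReal_re,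
    Complex.sin_ofReal_re, Complex.cos_ofReal_im, Complex.sin_ofReal_im]
  nlinarith [Real.sin_sq_add_cos_sq φ]

open Real in
private lemma prod_sinsq (N : ℕ) (hN : 0 < N) :
    ∏ t ∈ Finset.range (N-1), (2 * Real.sin (((t:ℝ)+1) * π / N))^2 = (N:ℝ)^2 := by
  obtain ⟨M, rfl⟩ : ∃ M, N = M + 1 := ⟨N - 1, by omega⟩
  have hμ := Complex.isPrimitiveRoot_exp (M+1) (by omega)
  have hprod := hμ.prod_one_sub_pow_eq_order
  have hns := congrArg Complex.normSq hprod
  rw [map_prod] at hns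
  simp only [Nat.add_sub_cancel]
  rw [show ((M+1:ℕ):ℝ)^2 = Complex.normSq ((M:ℂ)+1) by
    simp [Complex.normSq_apply]; ring]
  rw [← hns]
  apply Finset.prod_congr rfl
  intro k hk
  have hexp : Complex.exp (2 * π * Complex.I / (M+1:ℕ)) ^ (k+1)
      = Complex.exp (((2 * π * (k+1) / (M+1:ℕ) : ℝ) : ℂ) * Complex.I) := by
    rw [← Complex.exp_nat_mul]
    congr 1
    push_cast
    have hne : ((M:ℂ)+1) ≠ 0 := by
      exact_mod_cast (Nat.cast_ne_zero (R := ℂ)).2 (by omega : M + 1 ≠ 0)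
    field_simp
  rw [hexp, normSq_one_sub_exp]
  congr 2
  push_cast
  ring

private lemma fTerm_eq (m N k : ℕ) :
    fTerm (m+2) N k = (2 * Real.sin ((↑(m+k) : ℝ) * Real.pi / N))^2 := by
  unfold fTerm
  congr 3
  push_cast
  ring

private lemma gTerm_nonneg (n N j : ℕ) : 0 ≤ gTerm n N j :=
  Finset.prod_nonneg fun _ _ => sq_nonneg _

private lemma gTerm_add (n N j d : ℕ) :
    gTerm n N (j+d) = gTerm n N j * ∏ k ∈ Finset.range d, fTerm n N (j+k+1) := by
  unfold gTerm
  rw [Finset.prod_range_add]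

private lemma gTerm_le_up (n N j d : ℕ) (h : ∀ k ∈ Finset.range d, 1 ≤ fTerm n N (j+k+1)) :
    gTerm n N j ≤ gTerm n N (j+d) := by
  rw [gTerm_add]
  have h1 : (1:ℝ) ≤ ∏ k ∈ Finset.range d, fTerm n N (j+k+1) := by
    calc (1:ℝ) = ∏ _k ∈ Finset.range d, (1:ℝ) := by simp
      _ ≤ _ := Finset.prod_le_prod (by simp) h
  nlinarith [gTerm_nonneg n N j]

private lemma gTerm_le_down (n N j d : ℕ) (h : ∀ k ∈ Finset.range d, fTerm n N (j+k+1) ≤ 1) :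
    gTerm n N (j+d) ≤ gTerm n N j := by
  rw [gTerm_add]
  have h1 : ∏ k ∈ Finset.range d, fTerm n N (j+k+1) ≤ 1 :=
    Finset.prod_le_one (fun k _ => sq_nonneg _) h
  nlinarith [gTerm_nonneg n N j]

theorem stmt_16 (n : ℕ) (hn : 2 ≤ n) :
    ∃ N₀ : ℕ, ∀ N : ℕ, N₀ ≤ N →
      ∃ j : ℕ,
        (⌊(5 : ℝ) / 6 * N - 2 * ((n : ℝ) - 2)⌋ ≤ (j : ℤ)) ∧
        ((j : ℤ) ≤ ⌊(5 : ℝ) / 6 * N⌋ - ((n : ℤ) - 2)) ∧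
        ∀ j' : ℕ, j' ≤ N - 1 → gTerm n N j' ≤ gTerm n N j := by
  obtain ⟨m, rfl⟩ : ∃ m, n = m + 2 := ⟨n - 2, by omega⟩
  refine ⟨2^m + 12*m + 12, fun N hN => ?_⟩
  have h2m1 : 1 ≤ 2^m := Nat.one_le_two_pow
  have hN12 : 12*m + 12 ≤ N := by omega
  have hNpos : 0 < N := by omega
  set B : ℕ := 5*N/6 with hBdef
  have hdm := Nat.div_add_mod (5*N) 6
  have hmod : 5*N % 6 < 6 := Nat.mod_lt _ (by norm_num)
  have h6B : 6*B ≤ 5*N := by omega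
  have h6B' : 5*N < 6*B + 6 := by omega
  have hBm : 2*m ≤ B := by omega
  have hBN : B + 1 ≤ N := by omega
  have hNRpos : (0:ℝ) < N := by exact_mod_cast hNpos
  -- floor computation
  have hfloor : ⌊(5 : ℝ) / 6 * N⌋ = (B : ℤ) := by
    rw [Int.floor_eq_iff]
    constructor
    · have : (6*B:ℝ) ≤ 5*N := by exact_mod_cast h6B
      push_cast
      linarith
    · have : (5*N:ℝ) < 6*B + 6 := by exact_mod_cast h6B'
      push_cast
      linarith
  refine ⟨B - m, ?_, ?_, ?_⟩
  · have h2 : (2:ℝ) * ((↑(m+2):ℝ) - 2) = ((2*m : ℤ) : ℝ) := by push_cast; ring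
    rw [h2, Int.floor_sub_intCast, hfloor]
    omega
  · rw [hfloor]
    omega
  · intro j' hj'
    -- key fact: 1 ≤ gTerm at B - m
    have hdown_high : ∀ (a d : ℕ), B ≤ m + a → (∀ k, k < d → m + a + d ≤ N) →
        gTerm (m+2) N (a+d) ≤ gTerm (m+2) N a := by
      intro a d ha hd
      apply gTerm_le_down
      intro k hk
      rw [Finset.mem_range] at hk
      rw [fTerm_eq]
      apply le_one_sinsq_high _ _ hNpos
      · omega
      · have := hd k hk; omega
    have hg1 : 1 ≤ gTerm (m+2) N (B - m) := by
      have hkey : gTerm (m+2) N (N-1-m) ≤ gTerm (m+2) N (B-m) := by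
        have hsplit : N-1-m = (B-m) + (N-1-B) := by omega
        rw [hsplit]
        apply gTerm_le_down
        intro k hk
        rw [Finset.mem_range] at hk
        rw [fTerm_eq]
        apply le_one_sinsq_high _ _ hNpos <;> omega
      have hid := prod_sinsq N hNpos
      have hsplit2 : N - 1 = m + (N-1-m) := by omega
      rw [hsplit2, Finset.prod_range_add] at hid
      have hgid : (∏ t ∈ Finset.range m, (2 * Real.sin (((t:ℝ)+1) * Real.pi / N))^2)
          * gTerm (m+2) N (N-1-m) = (N:ℝ)^2 := by
        rw [← hid]
        congr 1
        unfold gTerm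
        apply Finset.prod_congr rfl
        intro i _
        rw [fTerm_eq]
        congr 2
        push_cast
        ring
      set P : ℝ := ∏ t ∈ Finset.range m, (2 * Real.sin (((t:ℝ)+1) * Real.pi / N))^2 with hP
      have hPpos : 0 < P := by
        apply Finset.prod_pos
        intro t ht
        rw [Finset.mem_range] at ht
        have h1 : 0 < ((t:ℝ)+1) * Real.pi / N := by positivity
        have h2 : ((t:ℝ)+1) * Real.pi / N < Real.pi := by
          rw [div_lt_iff₀ hNRpos]
          have : ((t:ℝ)+1) < N := by
            have : (t:ℕ) + 1 < N := by omega
            exact_mod_cast this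
          nlinarith [Real.pi_pos]
        have := Real.sin_pos_of_pos_of_lt_pi h1 h2
        positivity
      have hP4 : P ≤ 4^m := by
        calc P ≤ ∏ _t ∈ Finset.range m, (4:ℝ) := by
              apply Finset.prod_le_prod (fun _ _ => sq_nonneg _)
              intro t _
              nlinarith [Real.sin_le_one (((t:ℝ)+1) * Real.pi / N),
                Real.neg_one_le_sin (((t:ℝ)+1) * Real.pi / N)]
          _ = 4^m := by rw [Finset.prod_const, Finset.card_range]
      have hN4 : (4:ℝ)^m ≤ (N:ℝ)^2 := by
        have h2N : (2:ℝ)^m ≤ N := by exact_mod_cast (by omega : 2^m ≤ N)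
        have : (4:ℝ)^m = ((2:ℝ)^m)^2 := by rw [← pow_mul, pow_mul']; norm_num
        rw [this]
        have h2p : (0:ℝ) ≤ 2^m := by positivity
        nlinarith
      have hgNm : 1 ≤ gTerm (m+2) N (N-1-m) := by
        nlinarith [gTerm_nonneg (m+2) N (N-1-m)]
      linarith
    rcases le_or_gt j' (B - m) with hc | hc
    · rcases le_or_gt N (6*(m+j'+1)) with hc2 | hc2
      · -- increasing from j' to B - m
        have hsplit : B - m = j' + (B - m - j') := by omega
        rw [hsplit]
        apply gTerm_le_up
        intro k hk
        rw [Finset.mem_range] at hk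
        rw [fTerm_eq]
        apply one_le_sinsq _ _ hNpos <;> omega
      · -- gTerm j' ≤ 1
        have hle1 : gTerm (m+2) N j' ≤ 1 := by
          have h0 : gTerm (m+2) N (0 + j') ≤ gTerm (m+2) N 0 := by
            apply gTerm_le_down
            intro k hk
            rw [Finset.mem_range] at hk
            rw [fTerm_eq]
            apply le_one_sinsq_low _ _ hNpos
            omega
          simpa [gTerm] using h0
        linarith
    · -- decreasing from B - m to j'
      have hsplit : j' = (B - m) + (j' - (B - m)) := by omega
      rw [hsplit]
      apply gTerm_le_down
      intro k hk
      rw [Finset.mem_range] at hk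
      rw [fTerm_eq]
      rcases le_or_gt (m + (B - m + k + 1)) N with ht | ht
      · apply le_one_sinsq_high _ _ hNpos <;> omega
      · apply le_one_sinsq_over _ _ hNpos <;> omega
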